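/- Let Q be an n×n real symmetric positive semidefinite matrix with positive semidefinite square root M, let C be an m×n real matrix with rank C = m and Moore–Penrose pseudoinverse C⁺, and let N = I − C⁺C. Then for every ε > 0: (C(Q + εI)⁻¹Cᵀ)⁻¹ = ε(CCᵀ)⁻¹ + C⁺ᵀ M (I + ε⁻¹·M·N·N·M)⁻¹ M C⁺, where all inverses appearing exist (in particular CCᵀ, C(Q+εI)⁻¹Cᵀ and I + ε⁻¹MNNM are invertible). -/

import Mathlib

open Matrix

/-- `Ap` is the Moore–Penrose pseudoinverse of `A`. -/
def IsMoorePenrose {m n : ℕ} (A : Matrix (Fin m) (Fin n) ℝ)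
    (Ap : Matrix (Fin n) (Fin m) ℝ) : Prop :=
  A * Ap * A = A ∧ Ap * A * Ap = Ap ∧ (A * Ap)ᵀ = A * Ap ∧ (Ap * A)ᵀ = Ap * A

private lemma psd_smul {n : ℕ} {A : Matrix (Fin n) (Fin n) ℝ} (hA : A.PosSemidef)
    {c : ℝ} (hc : 0 ≤ c) : (c • A).PosSemidef := by
  refine Matrix.PosSemidef.of_dotProduct_mulVec_nonneg ?_ fun x => ?_
  · have h1 : Aᴴ = A := hA.1
    show (c • A)ᴴ = c • A
    rw [conjTranspose_smul, h1, star_trivial]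
  · rw [smul_mulVec, dotProduct_smul]
    exact mul_nonneg hc (hA.dotProduct_mulVec_nonneg x)

/-- Woodbury-type identity: for every ε > 0,
(C(Q+εI)⁻¹Cᵀ)⁻¹ = ε(CCᵀ)⁻¹ + C⁺ᵀ M (I + ε⁻¹MNNM)⁻¹ M C⁺, where all the inverses
appearing exist. -/
theorem woodbury_identity (n m : ℕ)
    (Q M : Matrix (Fin n) (Fin n) ℝ) (hQ : Q.PosSemidef)
    (hM : M.PosSemidef) (hMsq : M * M = Q)
    (C : Matrix (Fin m) (Fin n) ℝ) (hrankC : C.rank = m)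
    (Cp : Matrix (Fin n) (Fin m) ℝ) (hCp : IsMoorePenrose C Cp)
    (N : Matrix (Fin n) (Fin n) ℝ) (hN : N = 1 - Cp * C) :
    IsUnit (C * Cᵀ) ∧
    ∀ ε : ℝ, 0 < ε →
      IsUnit (C * (Q + ε • (1 : Matrix (Fin n) (Fin n) ℝ))⁻¹ * Cᵀ) ∧
      IsUnit ((1 : Matrix (Fin n) (Fin n) ℝ) + ε⁻¹ • (M * N * N * M)) ∧
      (C * (Q + ε • (1 : Matrix (Fin n) (Fin n) ℝ))⁻¹ * Cᵀ)⁻¹ =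
        ε • (C * Cᵀ)⁻¹ +
          Cpᵀ * M * ((1 : Matrix (Fin n) (Fin n) ℝ) + ε⁻¹ • (M * N * N * M))⁻¹ * M * Cp := by
  obtain ⟨h1, h2, h3, h4⟩ := hCp
  have hMt : Mᵀ = M := by
    rw [← conjTranspose_eq_transpose_of_trivial]
    exact hM.1
  have hNt : Nᵀ = N := by
    rw [hN, transpose_sub, transpose_one, h4]
  -- C * Cᵀ is a unit
  have hrk : (C * Cᵀ).rank = Fintype.card (Fin m) := by
    rw [rank_self_mul_transpose, hrankC, Fintype.card_fin]
  have hCCt : IsUnit (C * Cᵀ) := by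
    rw [← Matrix.mulVec_surjective_iff_isUnit]
    have htop : LinearMap.range (C * Cᵀ).mulVecLin = ⊤ := by
      apply Submodule.eq_top_of_finrank_eq
      rw [Module.finrank_pi]
      exact hrk
    intro y
    have hy : y ∈ LinearMap.range (C * Cᵀ).mulVecLin := htop ▸ Submodule.mem_top
    obtain ⟨x, hx⟩ := hy
    exact ⟨x, hx⟩
  have hdet : IsUnit (C * Cᵀ).det := (isUnit_iff_isUnit_det _).mp hCCt
  -- C * Cp = 1
  have hCCp : C * Cp = 1 := by
    have h5 : C * Cp * (C * Cᵀ) = C * Cᵀ := by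
      rw [← Matrix.mul_assoc, h1]
    have h5' : C * Cp * (C * Cᵀ) * (C * Cᵀ)⁻¹ = C * Cᵀ * (C * Cᵀ)⁻¹ := by rw [h5]
    rwa [mul_nonsing_inv_cancel_right _ _ hdet, mul_nonsing_inv _ hdet] at h5'
  -- Cp = Cᵀ (C Cᵀ)⁻¹
  have hCpt : Cᵀ * Cpᵀ = Cp * C := by
    rw [← transpose_mul, h4]
  have h6 : Cp * (C * Cᵀ) = Cᵀ := by
    calc Cp * (C * Cᵀ) = (Cp * C) * Cᵀ := by rw [Matrix.mul_assoc]
      _ = Cᵀ * Cpᵀ * Cᵀ := by rw [hCpt]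
      _ = Cᵀ * (Cpᵀ * Cᵀ) := by rw [Matrix.mul_assoc]
      _ = Cᵀ * (C * Cp)ᵀ := by rw [transpose_mul]
      _ = Cᵀ := by rw [hCCp, transpose_one, Matrix.mul_one]
  have hCpinv : Cᵀ * (C * Cᵀ)⁻¹ = Cp := by
    have h6' : Cp * (C * Cᵀ) * (C * Cᵀ)⁻¹ = Cᵀ * (C * Cᵀ)⁻¹ := by rw [h6]
    rw [mul_nonsing_inv_cancel_right _ _ hdet] at h6'
    exact h6'.symm
  have hCpC : Cp * C = 1 - N := by rw [hN]; abel
  have hCN : C * N = 0 := by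
    rw [hN, Matrix.mul_sub, Matrix.mul_one, ← Matrix.mul_assoc, h1, sub_self]
  have hPP : (Cp * C) * (Cp * C) = Cp * C := by
    calc (Cp * C) * (Cp * C) = Cp * (C * Cp) * C := by
          simp only [Matrix.mul_assoc]
      _ = Cp * C := by rw [hCCp, Matrix.mul_one]
  have hNN : N * N = N := by
    rw [hN, Matrix.sub_mul, Matrix.one_mul, Matrix.mul_sub, Matrix.mul_one, hPP,
      sub_self, sub_zero]
  refine ⟨hCCt, fun ε hε => ?_⟩
  have hεne : ε ≠ 0 := ne_of_gt hε
  -- S is positive definite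
  set S : Matrix (Fin n) (Fin n) ℝ := Q + ε • (1 : Matrix (Fin n) (Fin n) ℝ) with hSdef
  have hεone : (ε • (1 : Matrix (Fin n) (Fin n) ℝ)).PosDef := by
    rw [smul_one_eq_diagonal]
    exact posDef_diagonal_iff.mpr fun i => hε
  have hSpd : S.PosDef := Matrix.PosDef.posSemidef_add hQ hεone
  have hSdet : IsUnit S.det := (isUnit_iff_isUnit_det _).mp hSpd.isUnit
  -- T is positive definite
  have hMNt : (M * N)ᴴ = N * M := by
    rw [conjTranspose_eq_transpose_of_trivial, transpose_mul, hNt, hMt]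
  have hApsd : (M * N * N * M).PosSemidef := by
    have h7 := posSemidef_self_mul_conjTranspose (M * N)
    rwa [hMNt, show M * N * (N * M) = M * N * N * M by simp only [Matrix.mul_assoc]] at h7
  set T : Matrix (Fin n) (Fin n) ℝ :=
    (1 : Matrix (Fin n) (Fin n) ℝ) + ε⁻¹ • (M * N * N * M) with hTdef
  have hTpd : T.PosDef :=
    Matrix.PosDef.add_posSemidef Matrix.PosDef.one (psd_smul hApsd (inv_nonneg.mpr hε.le))
  have hTdet : IsUnit T.det := (isUnit_iff_isUnit_det _).mp hTpd.isUnit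
  have hTT : T * T⁻¹ = 1 := mul_nonsing_inv _ hTdet
  have h8 : T⁻¹ + ε⁻¹ • ((M * N * N * M) * T⁻¹) = 1 := by
    calc T⁻¹ + ε⁻¹ • ((M * N * N * M) * T⁻¹)
        = ((1 : Matrix (Fin n) (Fin n) ℝ) + ε⁻¹ • (M * N * N * M)) * T⁻¹ := by
          rw [Matrix.add_mul, Matrix.one_mul, Matrix.smul_mul]
      _ = T * T⁻¹ := by rw [← hTdef]
      _ = 1 := hTT
  have hAT : ε⁻¹ • ((M * N * N * M) * T⁻¹) = 1 - T⁻¹ := by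
    rw [eq_sub_iff_add_eq, add_comm]
    exact h8
  -- the key identity
  set X : Matrix (Fin n) (Fin m) ℝ := M * (T⁻¹ * (M * Cp)) with hXdef
  set Y : Matrix (Fin n) (Fin m) ℝ := Cp - ε⁻¹ • (N * X) with hYdef
  set R : Matrix (Fin m) (Fin m) ℝ :=
    ε • (C * Cᵀ)⁻¹ + Cpᵀ * M * T⁻¹ * M * Cp with hRdef
  have hCY : C * Y = 1 := by
    rw [hYdef, Matrix.mul_sub, hCCp, Matrix.mul_smul, ← Matrix.mul_assoc, hCN,
      Matrix.zero_mul, smul_zero, sub_zero]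
  have e1 : Q * (N * X) = M * ((M * N * N * M * T⁻¹) * (M * Cp)) := by
    rw [hXdef]
    conv_lhs => rw [← hMsq, show N = N * N from hNN.symm]
    simp only [Matrix.mul_assoc]
  have hsub : Q * Cp - ε⁻¹ • (Q * (N * X)) = X := by
    rw [e1, ← Matrix.mul_smul, ← Matrix.smul_mul, hAT, Matrix.sub_mul, Matrix.one_mul,
      Matrix.mul_sub, ← hMsq, hXdef, Matrix.mul_assoc, sub_sub_cancel]
  have key : S * Y = Cᵀ * R := by
    have lhs_eq : S * Y = (Q * Cp - ε⁻¹ • (Q * (N * X))) + (ε • Cp - N * X) := by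
      rw [hSdef, hYdef]
      simp only [Matrix.add_mul, Matrix.mul_sub, Matrix.smul_mul, Matrix.one_mul,
        Matrix.mul_smul, smul_sub, smul_smul, mul_inv_cancel₀ hεne, one_smul]
      rw [smul_add, smul_smul, inv_mul_cancel₀ hεne, one_smul]
      module
    have rhs_eq : Cᵀ * R = ε • Cp + (X - N * X) := by
      rw [hRdef, Matrix.mul_add, Matrix.mul_smul, hCpinv]
      congr 1
      calc Cᵀ * (Cpᵀ * M * T⁻¹ * M * Cp) = (Cᵀ * Cpᵀ) * (M * (T⁻¹ * (M * Cp))) := by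
            simp only [Matrix.mul_assoc]
        _ = (1 - N) * X := by rw [hCpt, hCpC, hXdef]
        _ = X - N * X := by rw [Matrix.sub_mul, Matrix.one_mul]
    rw [lhs_eq, rhs_eq, hsub]
    abel
  have hfin : (C * S⁻¹ * Cᵀ) * R = 1 := by
    calc C * S⁻¹ * Cᵀ * R = C * (S⁻¹ * (Cᵀ * R)) := by simp only [Matrix.mul_assoc]
      _ = C * (S⁻¹ * (S * Y)) := by rw [key]
      _ = C * Y := by rw [nonsing_inv_mul_cancel_left _ _ hSdet]
      _ = 1 := hCY
  have hunit : IsUnit (C * S⁻¹ * Cᵀ) := by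
    have hd : (C * S⁻¹ * Cᵀ).det * R.det = 1 := by
      rw [← det_mul, hfin, det_one]
    exact (isUnit_iff_isUnit_det _).mpr (IsUnit.of_mul_eq_one _ hd)
  exact ⟨hunit, hTpd.isUnit, inv_eq_right_inv hfin⟩
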